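/- arXiv:1701.01001 — 2 statements merged into one kernel-verified Lean document; each statement's English description precedes it below -/
import Mathlib

section
/- Alternative representation of the truncated asymptotic variance: for all n ∈ ℕ, z_{0:n−1} ∈ Z^n, m ∈ {0,…,n}, and bounded measurable h on X, the quantity T^{m,n}⟨z_{0:n−1}⟩(h) := (μ_{1_{m,n}}⟨z_{0:n−1}⟩h^{⊗2} − μ_{0_n}⟨z_{0:n−1}⟩h^{⊗2}) / (χQ⟨z_{0:n−1}⟩1_X)² satisfies T^{m,n}⟨z_{0:n−1}⟩(h) = η⟨z_{0:m−1}⟩((Q⟨z_{m:n−1}⟩h)²) / (η⟨z_{0:m−1}⟩Q⟨z_{m:n−1}⟩1_X)² − (η⟨z_{0:n−1}⟩h)², and consequently, for all ℓ ∈ {0,…,n}, σ²_ℓ⟨z_{0:n−1}⟩(h) = Σ_{m=ℓ}^{n} T^{m,n}⟨z_{0:n−1}⟩(h − η⟨z_{0:n−1}⟩h). -/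
noncomputable section

section FeynmanKac
open MeasureTheory ProbabilityTheory

variable {X Z : Type*} [MeasurableSpace X] [MeasurableSpace Z]

/-- The unnormalised Feynman-Kac operator `Q⟨z_{k:k+len-1}⟩` acting on functions:
`Q⟨z_{k:m}⟩h(x) = g_{z_k}(x) ∫ Q⟨z_{k+1:m}⟩h(y) M(x,dy)`, the identity when `len = 0`. -/
def Qop (M : Kernel X X) (g : Z → X → ℝ) (z : ℕ → Z) (k len : ℕ) (h : X → ℝ) : X → ℝ :=
  (List.range len).foldr (fun i acc x => g (z (k + i)) x * ∫ y, acc y ∂(M x)) h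

/-- `γ⟨z_{0:n-1}⟩h = χQ⟨z_{0:n-1}⟩h`. -/
def gammaFK (χ : Measure X) (M : Kernel X X) (g : Z → X → ℝ) (z : ℕ → Z)
    (n : ℕ) (h : X → ℝ) : ℝ :=
  ∫ x, Qop M g z 0 n h x ∂χ

/-- The predictor functional `η⟨z_{0:n-1}⟩h = χQ⟨z_{0:n-1}⟩h / χQ⟨z_{0:n-1}⟩1`. -/
def etaFK (χ : Measure X) (M : Kernel X X) (g : Z → X → ℝ) (z : ℕ → Z)
    (n : ℕ) (h : X → ℝ) : ℝ :=
  gammaFK χ M g z n h / gammaFK χ M g z n (fun _ => 1)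

/-- The truncated asymptotic variance
`σ²_ℓ⟨z_{0:n-1}⟩(h) = Σ_{m=ℓ}^n η⟨z_{0:m-1}⟩({Q⟨z_{m:n-1}⟩(h - η⟨z_{0:n-1}⟩h)}²)
  / (η⟨z_{0:m-1}⟩Q⟨z_{m:n-1}⟩1)²`. -/
def sigmaSq (χ : Measure X) (M : Kernel X X) (g : Z → X → ℝ) (z : ℕ → Z)
    (ℓ n : ℕ) (h : X → ℝ) : ℝ :=
  ∑ m ∈ Finset.Icc ℓ n,
    etaFK χ M g z m
        (fun x => (Qop M g z m (n - m) (fun y => h y - etaFK χ M g z n h) x) ^ 2)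
      / (etaFK χ M g z m (Qop M g z m (n - m) (fun _ => 1))) ^ 2

/-- Sup norm `‖h‖_∞` of a (bounded) function. -/
def supn {Y : Type*} (h : Y → ℝ) : ℝ := sSup (Set.range fun x => |h x|)

end FeynmanKac

section CoupledFK
open MeasureTheory ProbabilityTheory

variable {X Z : Type*} [MeasurableSpace X] [MeasurableSpace Z]

/-- The coupled Feynman-Kac measure `μ_{b_{0:n}}⟨z_{0:n-1}⟩` (as an integration functional):
`μ_{b_{0:n}}⟨z_{0:n-1}⟩ f = E[f(X_n, X'_n) ∏_{m=0}^{n-1} g_{z_m}(X_m) g_{z_m}(X'_m)]`, where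
`(X_m, X'_m)` is the coupled Markov chain that starts from `χ ⊗ χ` (`b_0 = 0`) or from the
diagonal copy of `χ` (`b_0 = 1`), and whose components move conditionally independently
according to `M` when `b_{m+1} = 0` and jointly (as a single draw from `M(X_m, ·)`) when
`b_{m+1} = 1`. -/
def muB (χ : Measure X) (M : Kernel X X) (g : Z → X → ℝ) (z : ℕ → Z) (b : ℕ → Bool) :
    ℕ → (X × X → ℝ) → ℝ
  | 0, f => if b 0 then ∫ x, f (x, x) ∂χ else ∫ x, ∫ y, f (x, y) ∂χ ∂χ
  | n + 1, f =>
      muB χ M g z b n fun p =>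
        g (z n) p.1 * g (z n) p.2 *
          (if b (n + 1) then ∫ y, f (y, y) ∂(M p.1)
           else ∫ y, ∫ y', f (y, y') ∂(M p.2) ∂(M p.1))

end CoupledFK

set_option linter.unusedSectionVars false

section AuxLemmas
open MeasureTheory ProbabilityTheory
variable {X Z : Type*} [MeasurableSpace X] [MeasurableSpace Z]
variable (M : Kernel X X) (g : Z → X → ℝ) (z : ℕ → Z)

lemma Qop_zero (k : ℕ) (h : X → ℝ) : Qop M g z k 0 h = h := rfl

lemma Qop_succ (k len : ℕ) (h : X → ℝ) :
    Qop M g z k (len + 1) h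
      = fun x => g (z k) x * ∫ y, Qop M g z (k + 1) len h y ∂(M x) := by
  unfold Qop
  rw [List.range_succ_eq_map, List.foldr_cons, List.foldr_map]
  have e : ∀ i, k + 1 + i = k + Nat.succ i := fun i => by omega
  simp only [Nat.add_zero, e]

lemma Qop_succ_back (k len : ℕ) (h : X → ℝ) :
    Qop M g z k (len + 1) h
      = Qop M g z k len (fun x => g (z (k + len)) x * ∫ y, h y ∂(M x)) := by
  unfold Qop
  rw [List.range_succ, List.foldr_append, List.foldr_cons, List.foldr_nil]

/-- Bounded measurable predicate. -/
def BM (f : X → ℝ) : Prop := Measurable f ∧ ∃ c, ∀ x, |f x| ≤ c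

lemma BM.integrable {f : X → ℝ} (hf : BM f) (μ : Measure X) [IsProbabilityMeasure μ] :
    Integrable f μ := by
  obtain ⟨hm, c, hc⟩ := hf
  exact (integrable_const c).mono' hm.aestronglyMeasurable
    (Filter.Eventually.of_forall fun x => by simpa using hc x)

lemma BM.kernelInt {f : X → ℝ} (hf : BM f) [IsMarkovKernel M] :
    BM (fun x => ∫ y, f y ∂(M x)) := by
  obtain ⟨hm, c, hc⟩ := hf
  refine ⟨?_, c, fun x => ?_⟩
  · have : StronglyMeasurable fun p : X × X => f p.2 :=
      (hm.stronglyMeasurable).comp_measurable measurable_snd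
    exact (this.integral_kernel_prod_right' (κ := M)).measurable
  · calc |∫ y, f y ∂(M x)| ≤ ∫ y, |f y| ∂(M x) := by
          simpa using norm_integral_le_integral_norm (μ := M x) f
      _ ≤ ∫ _, c ∂(M x) := by
          refine integral_mono_of_nonneg (Filter.Eventually.of_forall fun y => abs_nonneg _)
            (integrable_const c) (Filter.Eventually.of_forall fun y => hc y)
      _ = c := by simp

lemma BM.const (c : ℝ) : BM (fun _ : X => c) := ⟨measurable_const, |c|, fun _ => le_rfl⟩

lemma BM.gmul {f : X → ℝ} (hf : BM f) (hgmeas : ∀ zz, Measurable (g zz))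
    (hgpos : ∀ zz x, 0 < g zz x) (hgbdd : ∀ zz, ∃ c, ∀ x, g zz x ≤ c) (zz : Z) :
    BM (fun x => g zz x * f x) := by
  obtain ⟨hm, c, hc⟩ := hf
  obtain ⟨d, hd⟩ := hgbdd zz
  refine ⟨(hgmeas zz).mul hm, d * c, fun x => ?_⟩
  rw [abs_mul]
  have h1 : |g zz x| ≤ d := by rw [abs_of_pos (hgpos zz x)]; exact hd x
  exact mul_le_mul h1 (hc x) (abs_nonneg _) ((abs_nonneg (g zz x)).trans h1)

lemma BM.Qop {h : X → ℝ} (hh : BM h) (hgmeas : ∀ zz, Measurable (g zz))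
    (hgpos : ∀ zz x, 0 < g zz x) (hgbdd : ∀ zz, ∃ c, ∀ x, g zz x ≤ c)
    [IsMarkovKernel M] (k len : ℕ) :
    BM (Qop M g z k len h) := by
  induction len generalizing k with
  | zero => exact hh
  | succ l ih =>
    rw [Qop_succ]
    exact BM.gmul g ((ih (k+1)).kernelInt M) hgmeas hgpos hgbdd (z k)

lemma Qop_comp (k a b : ℕ) (h : X → ℝ) :
    Qop M g z k a (Qop M g z (k + a) b h) = Qop M g z k (a + b) h := by
  induction a generalizing k with
  | zero => simp [Qop_zero]
  | succ l ih =>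
    have e : l + 1 + b = l + b + 1 := by omega
    rw [e, Qop_succ, Qop_succ]
    have e2 : k + (l + 1) = k + 1 + l := by omega
    rw [e2, ih (k + 1)]

lemma Qop_one_pos (hgpos : ∀ zz x, 0 < g zz x) (hgmeas : ∀ zz, Measurable (g zz))
    (hgbdd : ∀ zz, ∃ c, ∀ x, g zz x ≤ c) [IsMarkovKernel M] (k len : ℕ) (x : X) :
    0 < Qop M g z k len (fun _ => 1) x := by
  induction len generalizing k x with
  | zero => norm_num [Qop_zero]
  | succ l ih =>
    rw [Qop_succ]
    refine mul_pos (hgpos _ x) ?_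
    have hint : Integrable (Qop M g z (k+1) l (fun _ => 1)) (M x) :=
      (BM.Qop M g z (BM.const 1) hgmeas hgpos hgbdd (k+1) l).integrable (M x)
    rw [integral_pos_iff_support_of_nonneg (fun y => (ih (k+1) y).le) hint]
    have : Function.support (Qop M g z (k+1) l (fun _ => 1)) = Set.univ :=
      Set.eq_univ_of_forall fun y => (ih (k+1) y).ne'
    simp [this]

variable (χ : Measure X)

lemma gammaFK_succ (n : ℕ) (h : X → ℝ) :
    gammaFK χ M g z (n + 1) h
      = gammaFK χ M g z n (fun x => g (z n) x * ∫ y, h y ∂(M x)) := by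
  unfold gammaFK
  rw [Qop_succ_back]
  simp

lemma gammaFK_comp (m len : ℕ) (h : X → ℝ) :
    gammaFK χ M g z m (Qop M g z m len h) = gammaFK χ M g z (m + len) h := by
  unfold gammaFK
  have := Qop_comp M g z 0 m len h
  rw [Nat.zero_add] at this
  rw [this]

lemma gammaFK_one_pos (hgpos : ∀ zz x, 0 < g zz x) (hgmeas : ∀ zz, Measurable (g zz))
    (hgbdd : ∀ zz, ∃ c, ∀ x, g zz x ≤ c) [IsMarkovKernel M] [IsProbabilityMeasure χ] (n : ℕ) :
    0 < gammaFK χ M g z n (fun _ => 1) := by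
  unfold gammaFK
  have hint : Integrable (Qop M g z 0 n (fun _ => 1)) χ :=
    (BM.Qop M g z (BM.const 1) hgmeas hgpos hgbdd 0 n).integrable χ
  have hpos := Qop_one_pos M g z hgpos hgmeas hgbdd 0 n
  rw [integral_pos_iff_support_of_nonneg (fun y => (hpos y).le) hint]
  have : Function.support (Qop M g z 0 n (fun _ => 1)) = Set.univ :=
    Set.eq_univ_of_forall fun y => (hpos y).ne'
  simp [this]

lemma Qop_sub_const {h : X → ℝ} (hh : BM h) (hgmeas : ∀ zz, Measurable (g zz))
    (hgpos : ∀ zz x, 0 < g zz x) (hgbdd : ∀ zz, ∃ c, ∀ x, g zz x ≤ c)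
    [IsMarkovKernel M] (k len : ℕ) (c : ℝ) :
    Qop M g z k len (fun y => h y - c)
      = fun x => Qop M g z k len h x - c * Qop M g z k len (fun _ => 1) x := by
  induction len generalizing k with
  | zero => funext x; simp [Qop_zero]
  | succ l ih =>
    rw [Qop_succ, Qop_succ, Qop_succ]
    funext x
    rw [ih]
    rw [integral_sub ((BM.Qop M g z hh hgmeas hgpos hgbdd (k+1) l).integrable (M x))
        (((BM.Qop M g z (BM.const 1) hgmeas hgpos hgbdd (k+1) l).integrable (M x)).const_mul c),
      integral_const_mul]
    ring

lemma gammaFK_sub_const {h : X → ℝ} (hh : BM h) (hgmeas : ∀ zz, Measurable (g zz))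
    (hgpos : ∀ zz x, 0 < g zz x) (hgbdd : ∀ zz, ∃ c, ∀ x, g zz x ≤ c)
    [IsMarkovKernel M] [IsProbabilityMeasure χ] (n : ℕ) (c : ℝ) :
    gammaFK χ M g z n (fun y => h y - c)
      = gammaFK χ M g z n h - c * gammaFK χ M g z n (fun _ => 1) := by
  unfold gammaFK
  rw [Qop_sub_const M g z hh hgmeas hgpos hgbdd 0 n c]
  rw [integral_sub ((BM.Qop M g z hh hgmeas hgpos hgbdd 0 n).integrable χ)
      (((BM.Qop M g z (BM.const 1) hgmeas hgpos hgbdd 0 n).integrable χ).const_mul c),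
    integral_const_mul]


lemma muB_congr (b b' : ℕ → Bool) (n : ℕ) (f : X × X → ℝ)
    (hb : ∀ i ≤ n, b i = b' i) :
    muB χ M g z b n f = muB χ M g z b' n f := by
  induction n generalizing f with
  | zero => simp only [muB, hb 0 le_rfl]
  | succ n ih =>
    simp only [muB, hb (n + 1) le_rfl]
    exact ih _ fun i hi => hb i (hi.trans (Nat.le_succ n))

lemma muB_false_prod (n : ℕ) (h h' : X → ℝ) :
    muB χ M g z (fun _ => false) n (fun p => h p.1 * h' p.2)
      = gammaFK χ M g z n h * gammaFK χ M g z n h' := by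
  induction n generalizing h h' with
  | zero =>
    simp only [muB, Bool.false_eq_true, if_false]
    have : ∀ x : X, ∫ y, h x * h' y ∂χ = h x * ∫ y, h' y ∂χ := fun x => integral_const_mul _ _
    simp only [this, integral_mul_const]
    rfl
  | succ n ih =>
    simp only [muB, Bool.false_eq_true, if_false]
    have e : (fun p : X × X =>
          g (z n) p.1 * g (z n) p.2 * ∫ y, ∫ y', h y * h' y' ∂(M p.2) ∂(M p.1))
        = fun p : X × X => (fun x => g (z n) x * ∫ y, h y ∂(M x)) p.1
            * (fun x => g (z n) x * ∫ y, h' y ∂(M x)) p.2 := by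
      funext p
      have : ∀ y : X, ∫ y', h y * h' y' ∂(M p.2) = h y * ∫ y', h' y' ∂(M p.2) :=
        fun y => integral_const_mul _ _
      simp only [this, integral_mul_const]
      ring
    rw [e, gammaFK_succ, gammaFK_succ]
    exact ih (fun x => g (z n) x * ∫ y, h y ∂(M x)) (fun x => g (z n) x * ∫ y, h' y ∂(M x))

lemma muB_one_prod [IsMarkovKernel M] [IsProbabilityMeasure χ] (m j : ℕ) (h h' : X → ℝ) :
    muB χ M g z (fun l => decide (l = m)) (m + j) (fun p => h p.1 * h' p.2)
      = gammaFK χ M g z m (fun _ => 1)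
        * gammaFK χ M g z m (fun x => Qop M g z m j h x * Qop M g z m j h' x) := by
  induction j generalizing h h' with
  | zero =>
    rw [Nat.add_zero]
    cases m with
    | zero =>
      simp only [muB, decide_eq_true_eq, eq_self_iff_true, if_true, ite_true]
      have h0 : gammaFK χ M g z 0 (fun _ => 1) = 1 := by
        unfold gammaFK; simp [Qop_zero]
      rw [h0, one_mul]
      rfl
    | succ k =>
      simp only [muB, decide_eq_true_eq, eq_self_iff_true, if_true, ite_true]
      have e : (fun p : X × X =>
            g (z k) p.1 * g (z k) p.2 * ∫ y, h y * h' y ∂(M p.1))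
          = fun p : X × X => (fun x => g (z k) x * ∫ y, h y * h' y ∂(M x)) p.1
              * (fun x => g (z k) x) p.2 := by
        funext p; ring
      rw [e, muB_congr M g z χ _ (fun _ => false) k _
          (fun i hi => by simp; omega),
        muB_false_prod M g z χ k (fun x => g (z k) x * ∫ y, h y * h' y ∂(M x))
          (fun x => g (z k) x)]
      have e1 : gammaFK χ M g z k (fun x => g (z k) x * ∫ y, h y * h' y ∂(M x))
          = gammaFK χ M g z (k + 1) (fun x => h x * h' x) := (gammaFK_succ M g z χ k _).symm
      have e2 : gammaFK χ M g z k (fun x => g (z k) x)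
          = gammaFK χ M g z (k + 1) (fun _ => 1) := by
        rw [gammaFK_succ]
        congr 1
        funext x
        simp
      rw [e1, e2, Qop_zero, Qop_zero, mul_comm]
  | succ j ih =>
    have e0 : m + (j + 1) = (m + j) + 1 := by omega
    rw [e0]
    simp only [muB]
    have hne : decide ((m + j) + 1 = m) = false := by simp; omega
    rw [hne]
    simp only [Bool.false_eq_true, if_false]
    have e : (fun p : X × X =>
          g (z (m + j)) p.1 * g (z (m + j)) p.2
            * ∫ y, ∫ y', h y * h' y' ∂(M p.2) ∂(M p.1))
        = fun p : X × X => (fun x => g (z (m + j)) x * ∫ y, h y ∂(M x)) p.1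
            * (fun x => g (z (m + j)) x * ∫ y, h' y ∂(M x)) p.2 := by
      funext p
      have : ∀ y : X, ∫ y', h y * h' y' ∂(M p.2) = h y * ∫ y', h' y' ∂(M p.2) :=
        fun y => integral_const_mul _ _
      simp only [this, integral_mul_const]
      ring
    have e2 : (fun x => Qop M g z m (j + 1) h x * Qop M g z m (j + 1) h' x)
        = fun x => Qop M g z m j (fun x => g (z (m + j)) x * ∫ y, h y ∂(M x)) x
            * Qop M g z m j (fun x => g (z (m + j)) x * ∫ y, h' y ∂(M x)) x := by
      funext x
      rw [Qop_succ_back, Qop_succ_back]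
    rw [e, e2]
    exact ih (fun x => g (z (m + j)) x * ∫ y, h y ∂(M x))
      (fun x => g (z (m + j)) x * ∫ y, h' y ∂(M x))

end AuxLemmas

section Thm
open MeasureTheory ProbabilityTheory

variable {X Z : Type*} [MeasurableSpace X] [MeasurableSpace Z]

/-- `T^{m,n}⟨z_{0:n-1}⟩(h) := (μ_{1_{m,n}}⟨z_{0:n-1}⟩h^{⊗2} - μ_{0_n}⟨z_{0:n-1}⟩h^{⊗2})
  / (χQ⟨z_{0:n-1}⟩1)²`. -/
def Tterm (χ : Measure X) (M : Kernel X X) (g : Z → X → ℝ) (z : ℕ → Z)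
    (m n : ℕ) (h : X → ℝ) : ℝ :=
  (muB χ M g z (fun l => decide (l = m)) n (fun p => h p.1 * h p.2)
      - muB χ M g z (fun _ => false) n (fun p => h p.1 * h p.2))
    / (gammaFK χ M g z n (fun _ => 1)) ^ 2

variable (M : Kernel X X) (g : Z → X → ℝ) (z : ℕ → Z) (χ : Measure X)

lemma Tterm_eq [IsMarkovKernel M] [IsProbabilityMeasure χ]
    (hgmeas : ∀ zz, Measurable (g zz)) (hgpos : ∀ zz x, 0 < g zz x)
    (hgbdd : ∀ zz, ∃ c, ∀ x, g zz x ≤ c) (m n : ℕ) (hm : m ≤ n) (h : X → ℝ) :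
    Tterm χ M g z m n h
      = etaFK χ M g z m (fun x => (Qop M g z m (n - m) h x) ^ 2)
          / (etaFK χ M g z m (Qop M g z m (n - m) (fun _ => 1))) ^ 2
        - (etaFK χ M g z n h) ^ 2 := by
  have hmn : m + (n - m) = n := by omega
  have h1 : muB χ M g z (fun l => decide (l = m)) n (fun p => h p.1 * h p.2)
      = gammaFK χ M g z m (fun _ => 1)
        * gammaFK χ M g z m
            (fun x => Qop M g z m (n - m) h x * Qop M g z m (n - m) h x) := by
    have := muB_one_prod M g z χ m (n - m) h h
    rwa [hmn] at this
  have h0 := muB_false_prod M g z χ n h h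
  have hQ1 : gammaFK χ M g z m (Qop M g z m (n - m) (fun _ => 1))
      = gammaFK χ M g z n (fun _ => 1) := by
    rw [gammaFK_comp, hmn]
  have ha : 0 < gammaFK χ M g z m (fun _ => 1) :=
    gammaFK_one_pos M g z χ hgpos hgmeas hgbdd m
  have hb : 0 < gammaFK χ M g z n (fun _ => 1) :=
    gammaFK_one_pos M g z χ hgpos hgmeas hgbdd n
  have hsq : (fun x => (Qop M g z m (n - m) h x) ^ 2)
      = fun x => Qop M g z m (n - m) h x * Qop M g z m (n - m) h x := by
    funext x; ring
  unfold Tterm etaFK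
  rw [h1, h0, hQ1, hsq]
  have ha' : gammaFK χ M g z m (fun _ => 1) ≠ 0 := ha.ne'
  have hb' : gammaFK χ M g z n (fun _ => 1) ≠ 0 := hb.ne'
  field_simp

/-- **Alternative representation of the truncated asymptotic variance** (display (11) of
Olsson & Douc): for all `n`, `z_{0:n-1}`, `m ∈ {0,…,n}` and bounded measurable `h`,
`T^{m,n}⟨z_{0:n-1}⟩(h) = η⟨z_{0:m-1}⟩((Q⟨z_{m:n-1}⟩h)²)/(η⟨z_{0:m-1}⟩Q⟨z_{m:n-1}⟩1)²
  - (η⟨z_{0:n-1}⟩h)²`, and consequently, for all `ℓ ∈ {0,…,n}`,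
`σ²_ℓ⟨z_{0:n-1}⟩(h) = Σ_{m=ℓ}^n T^{m,n}⟨z_{0:n-1}⟩(h - η⟨z_{0:n-1}⟩h)`. -/
theorem variance_alternative_representation
    (M : Kernel X X) [IsMarkovKernel M] (χ : Measure X) [IsProbabilityMeasure χ]
    (g : Z → X → ℝ) (hgmeas : ∀ zz, Measurable (g zz))
    (hgpos : ∀ zz x, 0 < g zz x) (hgbdd : ∀ zz, ∃ c, ∀ x, g zz x ≤ c)
    (z : ℕ → Z) (n : ℕ) (h : X → ℝ) (hh : Measurable h) (hhbdd : ∃ c, ∀ x, |h x| ≤ c) :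
    (∀ m ≤ n,
      Tterm χ M g z m n h
        = etaFK χ M g z m (fun x => (Qop M g z m (n - m) h x) ^ 2)
            / (etaFK χ M g z m (Qop M g z m (n - m) (fun _ => 1))) ^ 2
          - (etaFK χ M g z n h) ^ 2)
    ∧ ∀ ℓ ≤ n,
        sigmaSq χ M g z ℓ n h
          = ∑ m ∈ Finset.Icc ℓ n,
              Tterm χ M g z m n (fun y => h y - etaFK χ M g z n h) := by
  constructor
  · intro m hm
    exact Tterm_eq M g z χ hgmeas hgpos hgbdd m n hm h
  · intro ℓ hℓ
    have hb : 0 < gammaFK χ M g z n (fun _ => 1) :=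
      gammaFK_one_pos M g z χ hgpos hgmeas hgbdd n
    have heta : etaFK χ M g z n (fun y => h y - etaFK χ M g z n h) = 0 := by
      unfold etaFK
      rw [gammaFK_sub_const M g z χ ⟨hh, hhbdd⟩ hgmeas hgpos hgbdd n _]
      have hb' : gammaFK χ M g z n (fun _ => 1) ≠ 0 := hb.ne'
      field_simp
      ring
    unfold sigmaSq
    refine Finset.sum_congr rfl fun m hmem => ?_
    have hm : m ≤ n := (Finset.mem_Icc.mp hmem).2
    rw [Tterm_eq M g z χ hgmeas hgpos hgbdd m n hm (fun y => h y - etaFK χ M g z n h),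
      heta]
    ring

end Thm
end
end

section
/- Closed forms of the coupled Feynman-Kac measures on zero and unit strings: for all n ∈ ℕ, z_{0:n−1} ∈ Z^n, m ∈ {0,…,n}, and bounded measurable h on X, μ_{0_n}⟨z_{0:n−1}⟩ h^{⊗2} = (χQ⟨z_{0:n−1}⟩h)² and μ_{1_{m,n}}⟨z_{0:n−1}⟩ h^{⊗2} = χQ⟨z_{0:m−1}⟩1_X · χQ⟨z_{0:m−1}⟩((Q⟨z_{m:n−1}⟩h)²). -/
noncomputable section

section AuxFK
open MeasureTheory ProbabilityTheory
variable {X Z : Type*} [MeasurableSpace X] [MeasurableSpace Z]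
set_option linter.unusedSectionVars false

namespace FKAux

lemma qop_zero (M : Kernel X X) (g : Z → X → ℝ) (z : ℕ → Z) (k : ℕ) (h : X → ℝ) :
    Qop M g z k 0 h = h := rfl

lemma qop_succ (M : Kernel X X) (g : Z → X → ℝ) (z : ℕ → Z) (k len : ℕ) (h : X → ℝ) :
    Qop M g z k (len + 1) h
      = Qop M g z k len (fun x => g (z (k + len)) x * ∫ y, h y ∂(M x)) := by
  unfold Qop
  rw [List.range_succ, List.foldr_append]
  rfl

variable (M : Kernel X X) [IsMarkovKernel M] (χ : Measure X) [IsProbabilityMeasure χ]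
    (g : Z → X → ℝ) (hgmeas : ∀ zz, Measurable (g zz))
    (hgpos : ∀ zz x, 0 < g zz x) (hgbdd : ∀ zz, ∃ c, ∀ x, g zz x ≤ c) (z : ℕ → Z)

lemma meas_int {h : X → ℝ} (hh : Measurable h) :
    Measurable fun x => ∫ y, h y ∂(M x) := by
  have : StronglyMeasurable (Function.uncurry fun (_ : X) (y : X) => h y) :=
    (hh.comp measurable_snd).stronglyMeasurable
  exact (MeasureTheory.StronglyMeasurable.integral_kernel_prod_right this).measurable

lemma int_bdd {h : X → ℝ} {c : ℝ} (hc : ∀ x, |h x| ≤ c) (x : X) :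
    |∫ y, h y ∂(M x)| ≤ c := by
  have h0 : 0 ≤ c := le_trans (abs_nonneg _) (hc x)
  calc |∫ y, h y ∂(M x)| ≤ ∫ y, |h y| ∂(M x) := by simpa [Real.norm_eq_abs] using norm_integral_le_integral_norm (μ := M x) h
    _ ≤ ∫ _, c ∂(M x) :=
        integral_mono_of_nonneg (Filter.Eventually.of_forall fun y => abs_nonneg _)
          (integrable_const c) (Filter.Eventually.of_forall hc)
    _ = c := by simp

/-- integrability of bounded measurable functions wrt finite measures -/
lemma intgr {μ : Measure X} [IsFiniteMeasure μ] {h : X → ℝ} (hh : Measurable h)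
    {c : ℝ} (hc : ∀ x, |h x| ≤ c) : Integrable h μ :=
  ⟨hh.aestronglyMeasurable,
    MeasureTheory.HasFiniteIntegral.of_bounded (C := c)
      (Filter.Eventually.of_forall (by simpa [Real.norm_eq_abs] using hc))⟩

include hgmeas hgpos hgbdd in
lemma gi_meas_bdd {h : X → ℝ} (hh : Measurable h) (hb : ∃ c, ∀ x, |h x| ≤ c) (j : ℕ) :
    Measurable (fun x => g (z j) x * ∫ y, h y ∂(M x))
      ∧ ∃ c, ∀ x, |g (z j) x * ∫ y, h y ∂(M x)| ≤ c := by
  obtain ⟨c, hc⟩ := hb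
  obtain ⟨cg, hcg⟩ := hgbdd (z j)
  refine ⟨(hgmeas (z j)).mul (meas_int M hh), cg * c, fun x => ?_⟩
  have h0 : 0 ≤ c := le_trans (abs_nonneg _) (hc x)
  have hgx : |g (z j) x| ≤ cg := by
    rw [abs_of_pos (hgpos (z j) x)]; exact hcg x
  calc |g (z j) x * ∫ y, h y ∂(M x)| = |g (z j) x| * |∫ y, h y ∂(M x)| := abs_mul _ _
    _ ≤ cg * c := mul_le_mul hgx (int_bdd M hc x) (abs_nonneg _)
        (le_trans (abs_nonneg _) hgx)

include hgmeas hgpos hgbdd in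
lemma qop_meas_bdd {h : X → ℝ} (hh : Measurable h) (hb : ∃ c, ∀ x, |h x| ≤ c) (k len : ℕ) :
    Measurable (Qop M g z k len h) ∧ ∃ c, ∀ x, |Qop M g z k len h x| ≤ c := by
  induction len generalizing h with
  | zero => exact ⟨hh, hb⟩
  | succ l ih =>
      rw [qop_succ]
      exact ih ((gi_meas_bdd M g hgmeas hgpos hgbdd z hh hb (k + l)).1)
        ((gi_meas_bdd M g hgmeas hgpos hgbdd z hh hb (k + l)).2)

include hgmeas hgpos hgbdd in
/-- Product lemma on the all-false prefix. -/
lemma muB_prod (n : ℕ) (b : ℕ → Bool) (hb : ∀ l, l ≤ n → b l = false)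
    {h1 h2 : X → ℝ} (hh1 : Measurable h1) (hb1 : ∃ c, ∀ x, |h1 x| ≤ c)
    (hh2 : Measurable h2) (hb2 : ∃ c, ∀ x, |h2 x| ≤ c) :
    muB χ M g z b n (fun p => h1 p.1 * h2 p.2)
      = (∫ x, Qop M g z 0 n h1 x ∂χ) * (∫ x, Qop M g z 0 n h2 x ∂χ) := by
  induction n generalizing h1 h2 with
  | zero =>
      obtain ⟨c1, hc1⟩ := hb1
      simp only [muB, hb 0 le_rfl, Bool.false_eq_true, if_false, qop_zero]
      have : ∀ x, ∫ y, h1 x * h2 y ∂χ = h1 x * ∫ y, h2 y ∂χ := fun x => integral_const_mul _ _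
      simp_rw [this]
      exact integral_mul_const _ _
  | succ n ih =>
      have hlt : b (n + 1) = false := hb (n + 1) le_rfl
      show muB χ M g z b n _ = _
      have key : (fun p : X × X =>
            g (z n) p.1 * g (z n) p.2 *
              (if b (n + 1) then ∫ y, h1 y * h2 y ∂(M p.1)
               else ∫ y, ∫ y', h1 y * h2 y' ∂(M p.2) ∂(M p.1)))
          = (fun p : X × X => (g (z n) p.1 * ∫ y, h1 y ∂(M p.1))
              * (g (z n) p.2 * ∫ y, h2 y ∂(M p.2))) := by
        funext p
        rw [hlt]
        simp only [Bool.false_eq_true, if_false]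
        have : ∀ y, ∫ y', h1 y * h2 y' ∂(M p.2) = h1 y * ∫ y', h2 y' ∂(M p.2) :=
          fun y => integral_const_mul _ _
        simp_rw [this, integral_mul_const]
        ring
      rw [key, ih (fun l hl => hb l (le_trans hl (Nat.le_succ n)))
        (gi_meas_bdd M g hgmeas hgpos hgbdd z hh1 hb1 n).1
        (gi_meas_bdd M g hgmeas hgpos hgbdd z hh1 hb1 n).2
        (gi_meas_bdd M g hgmeas hgpos hgbdd z hh2 hb2 n).1
        (gi_meas_bdd M g hgmeas hgpos hgbdd z hh2 hb2 n).2,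
        qop_succ, qop_succ]
      simp

/-- Peeling the all-false suffix down to index m. -/
lemma muB_peel (m : ℕ) (b : ℕ → Bool) (hb : ∀ l, m < l → b l = false)
    (n : ℕ) (hmn : m ≤ n) (h1 h2 : X → ℝ) :
    muB χ M g z b n (fun p => h1 p.1 * h2 p.2)
      = muB χ M g z b m
          (fun p => Qop M g z m (n - m) h1 p.1 * Qop M g z m (n - m) h2 p.2) := by
  induction n, hmn using Nat.le_induction generalizing h1 h2 with
  | base => simp [qop_zero]
  | succ n hmn ih =>
      have hlt : b (n + 1) = false := hb (n + 1) (Nat.lt_succ_of_le hmn)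
      show muB χ M g z b n _ = _
      have key : (fun p : X × X =>
            g (z n) p.1 * g (z n) p.2 *
              (if b (n + 1) then ∫ y, h1 y * h2 y ∂(M p.1)
               else ∫ y, ∫ y', h1 y * h2 y' ∂(M p.2) ∂(M p.1)))
          = (fun p : X × X => (g (z n) p.1 * ∫ y, h1 y ∂(M p.1))
              * (g (z n) p.2 * ∫ y, h2 y ∂(M p.2))) := by
        funext p
        rw [hlt]
        simp only [Bool.false_eq_true, if_false]
        have : ∀ y, ∫ y', h1 y * h2 y' ∂(M p.2) = h1 y * ∫ y', h2 y' ∂(M p.2) :=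
          fun y => integral_const_mul _ _
        simp_rw [this, integral_mul_const]
        ring
      rw [key, ih (fun x => g (z n) x * ∫ y, h1 y ∂(M x))
        (fun x => g (z n) x * ∫ y, h2 y ∂(M x))]
      have e1 : n + 1 - m = (n - m) + 1 := by omega
      have e2 : m + (n - m) = n := by omega
      rw [e1, qop_succ, qop_succ, e2]

end FKAux
end AuxFK

section Thm
open MeasureTheory ProbabilityTheory

variable {X Z : Type*} [MeasurableSpace X] [MeasurableSpace Z]

/-- **Closed forms of the coupled Feynman-Kac measures on zero and unit strings**: for all
`n`, `z_{0:n-1}`, `m ∈ {0,…,n}` and bounded measurable `h`,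
`μ_{0_n}⟨z_{0:n-1}⟩h^{⊗2} = (χQ⟨z_{0:n-1}⟩h)²` and
`μ_{1_{m,n}}⟨z_{0:n-1}⟩h^{⊗2} = χQ⟨z_{0:m-1}⟩1 ⋅ χQ⟨z_{0:m-1}⟩((Q⟨z_{m:n-1}⟩h)²)`. -/
theorem muB_zero_and_unit_string
    (M : Kernel X X) [IsMarkovKernel M] (χ : Measure X) [IsProbabilityMeasure χ]
    (g : Z → X → ℝ) (hgmeas : ∀ zz, Measurable (g zz))
    (hgpos : ∀ zz x, 0 < g zz x) (hgbdd : ∀ zz, ∃ c, ∀ x, g zz x ≤ c)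
    (z : ℕ → Z) (n m : ℕ) (hmn : m ≤ n)
    (h : X → ℝ) (hh : Measurable h) (hhbdd : ∃ c, ∀ x, |h x| ≤ c) :
    muB χ M g z (fun _ => false) n (fun p => h p.1 * h p.2)
        = (gammaFK χ M g z n h) ^ 2
      ∧ muB χ M g z (fun l => decide (l = m)) n (fun p => h p.1 * h p.2)
        = gammaFK χ M g z m (fun _ => 1)
            * gammaFK χ M g z m (fun x => (Qop M g z m (n - m) h x) ^ 2) := by
  constructor
  · rw [FKAux.muB_prod M χ g hgmeas hgpos hgbdd z n _ (fun l _ => rfl) hh hhbdd hh hhbdd]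
    rw [gammaFK, sq]
  · set b : ℕ → Bool := fun l => decide (l = m) with hbdef
    have hbfalse : ∀ l, m < l → b l = false := by
      intro l hl; simp [hbdef]; omega
    set H : X → ℝ := Qop M g z m (n - m) h with hH
    have hHm : Measurable H ∧ ∃ c, ∀ x, |H x| ≤ c :=
      FKAux.qop_meas_bdd M g hgmeas hgpos hgbdd z hh hhbdd m (n - m)
    rw [FKAux.muB_peel M χ g z m b hbfalse n hmn h h, ← hH]
    have hH2 : (fun p : X × X => H p.1 * H p.2) = fun p : X × X => H p.1 * H p.2 := rfl
    cases m with
    | zero =>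
        have hb0 : b 0 = true := by simp [hbdef]
        simp only [muB, hb0, if_true]
        rw [gammaFK, gammaFK, FKAux.qop_zero, FKAux.qop_zero]
        simp only [integral_const, measure_univ, probReal_univ, ENNReal.toReal_one, smul_eq_mul, one_mul,
          mul_one]
        congr 1
        funext x
        ring
    | succ k =>
        have hbk : b (k + 1) = true := by simp [hbdef]
        show muB χ M g z b k _ = _
        have key : (fun p : X × X =>
              g (z k) p.1 * g (z k) p.2 *
                (if b (k + 1) then ∫ y, H y * H y ∂(M p.1)
                 else ∫ y, ∫ y', H y * H y' ∂(M p.2) ∂(M p.1)))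
            = (fun p : X × X => (g (z k) p.1 * ∫ y, (fun t => H t ^ 2) y ∂(M p.1))
                * ((fun x => g (z k) x * ∫ y, (fun _ => (1:ℝ)) y ∂(M x)) p.2)) := by
          funext p
          rw [hbk]
          simp only [if_true, integral_const, measure_univ, probReal_univ, ENNReal.toReal_one, smul_eq_mul,
            one_mul, mul_one]
          have : (fun y => H y * H y) = fun y => H y ^ 2 := by funext y; ring
          rw [this]
          ring
        rw [key]
        have hH2meas : Measurable (fun t => H t ^ 2) := hHm.1.pow_const 2
        have hH2bdd : ∃ c, ∀ x, |(fun t => H t ^ 2) x| ≤ c := by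
          obtain ⟨c, hc⟩ := hHm.2
          exact ⟨c ^ 2, fun x => by
            rw [abs_pow]
            have h0 : 0 ≤ c := le_trans (abs_nonneg _) (hc x)
            exact pow_le_pow_left₀ (abs_nonneg _) (hc x) 2⟩
        have m1 := FKAux.gi_meas_bdd M g hgmeas hgpos hgbdd z hH2meas hH2bdd k
        have m2 := FKAux.gi_meas_bdd M g hgmeas hgpos hgbdd z (measurable_const (a := (1:ℝ)))
          ⟨1, fun x => by norm_num⟩ k
        rw [FKAux.muB_prod M χ g hgmeas hgpos hgbdd z k b
          (fun l hl => by simp [hbdef]; omega) m1.1 m1.2 m2.1 m2.2]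
        rw [gammaFK, gammaFK, FKAux.qop_succ, FKAux.qop_succ]
        simp only [Nat.zero_add, zero_add]
        rw [mul_comm]


end Thm
end
end
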